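/- The algebra Λ_{D,τ} of an oriented knot diagram with n ≥ 1 crossings has k-dimension 4n², i.e., the square of the number n_D = 2n of arrows of Q_D. -/

import Mathlib

open Quiver

/-- The type of arrows of a quiver, bundled with their endpoints. -/
abbrev QuiverArrow (V : Type) [Quiver.{0} V] : Type := Σ a b : V, a ⟶ b

/-- The defining relations of the path algebra of a quiver `V` over `k`, presented
as a quotient of the free algebra on the vertices (idempotents) and the arrows. -/
inductive PathAlgRel (k : Type) [CommRing k] (V : Type) [Quiver.{0} V] [Fintype V] [DecidableEq V] :
    FreeAlgebra k (V ⊕ QuiverArrow V) → FreeAlgebra k (V ⊕ QuiverArrow V) → Prop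
  | vertex (a b : V) :
      PathAlgRel k V (FreeAlgebra.ι k (Sum.inl a) * FreeAlgebra.ι k (Sum.inl b))
        (if a = b then FreeAlgebra.ι k (Sum.inl a) else 0)
  | unit : PathAlgRel k V (∑ a : V, FreeAlgebra.ι k (Sum.inl a)) 1
  | src (f : QuiverArrow V) (v : V) :
      PathAlgRel k V (FreeAlgebra.ι k (Sum.inr f) * FreeAlgebra.ι k (Sum.inl v))
        (if v = f.1 then FreeAlgebra.ι k (Sum.inr f) else 0)
  | tgt (f : QuiverArrow V) (v : V) :
      PathAlgRel k V (FreeAlgebra.ι k (Sum.inl v) * FreeAlgebra.ι k (Sum.inr f))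
        (if v = f.2.1 then FreeAlgebra.ι k (Sum.inr f) else 0)

/-- The path algebra `kQ` of a finite quiver. -/
abbrev PathAlg (k : Type) [CommRing k] (V : Type) [Quiver.{0} V] [Fintype V] [DecidableEq V] :
    Type := RingQuot (PathAlgRel k V)

variable (k : Type) [CommRing k] (V : Type) [Quiver.{0} V] [Fintype V] [DecidableEq V]

/-- The idempotent of the path algebra corresponding to a vertex (trivial path). -/
def vertexElem (a : V) : PathAlg k V :=
  RingQuot.mkAlgHom k (PathAlgRel k V) (FreeAlgebra.ι k (Sum.inl a))

/-- The element of the path algebra corresponding to an arrow. -/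
def arrowElem (f : QuiverArrow V) : PathAlg k V :=
  RingQuot.mkAlgHom k (PathAlgRel k V) (FreeAlgebra.ι k (Sum.inr f))

/-- The element of the path algebra corresponding to a path: the product of its arrows
(in composition order), with trivial paths mapping to the vertex idempotents. -/
def pathElem : ∀ {a b : V}, Quiver.Path a b → PathAlg k V
  | a, _, Quiver.Path.nil => vertexElem k V a
  | _, _, Quiver.Path.cons p f => arrowElem k V ⟨_, _, f⟩ * pathElem p

/-- The two-sided ideal of the path algebra generated by the arrows. -/
def arrowIdeal : TwoSidedIdeal (PathAlg k V) :=
  TwoSidedIdeal.span (Set.range (arrowElem k V))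

open Quiver

/-- The Gauss data of an oriented knot diagram with `n` crossings: traversing the knot,
one passes through `2 * n` crossing-points, indexed by `ZMod (2 * n)`; `c i` is the
crossing visited at position `i`, and `over e`, `under e` are the positions at which the
crossing `e` is visited over- resp. under-crossing. -/
structure GaussData (n : ℕ) where
  c : ZMod (2 * n) → Fin n
  overPt : Fin n → ZMod (2 * n)
  under : Fin n → ZMod (2 * n)
  bij : Function.Bijective (Sum.elim overPt under : Fin n ⊕ Fin n → ZMod (2 * n))
  c_over : ∀ e, c (overPt e) = e
  c_under : ∀ e, c (under e) = e

variable {n : ℕ}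

/-- The vertices of the quiver `Q_D` of the diagram: the crossings `Fin n`
(wrapped in a structure so that the quiver structure can depend on `D`). -/
@[ext] structure DiagVertex (D : GaussData n) where
  val : Fin n
  deriving DecidableEq

instance (D : GaussData n) : Fintype (DiagVertex D) :=
  Fintype.ofEquiv (Fin n) ⟨DiagVertex.mk, DiagVertex.val, fun _ => rfl, fun _ => rfl⟩

/-- The quiver `Q_D` of the diagram: vertices are the crossings, arrows are the segments,
indexed by `ZMod (2 * n)`; the arrow `i` has source `c i` and target `c (i + 1)`. -/
instance diagQuiver (D : GaussData n) : Quiver.{0} (DiagVertex D) :=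
  ⟨fun a b => { i : ZMod (2 * n) // D.c i = a.val ∧ D.c (i + 1) = b.val }⟩

namespace GaussData

variable (D : GaussData n)

/-- The path following the segments `i, i + 1, …, i + ℓ - 1`. -/
def segPath (i : ZMod (2 * n)) : ∀ ℓ : ℕ, Quiver.Path (⟨D.c i⟩ : DiagVertex D) ⟨D.c (i + ℓ)⟩
  | 0 => Quiver.Path.nil.cast rfl (congrArg (fun z => (⟨D.c z⟩ : DiagVertex D)) (by push_cast; ring))
  | ℓ + 1 =>
      (Quiver.Path.cons (segPath i ℓ)
        (⟨i + ℓ, rfl, rfl⟩ : (⟨D.c (i + ℓ)⟩ : DiagVertex D) ⟶ ⟨D.c (i + ℓ + 1)⟩)).cast rfl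
        (congrArg (fun z => (⟨D.c z⟩ : DiagVertex D)) (by push_cast; ring))

/-- The length of the path `α_e` : the unique representative in `{1, …, 2n}` of
`under e - over e` in `ZMod (2 * n)`. -/
def len₁ (e : Fin n) : ℕ :=
  if (D.under e - D.overPt e).val = 0 then 2 * n else (D.under e - D.overPt e).val

/-- The length of the path `β_e` : the unique representative in `{1, …, 2n}` of
`over e - under e` in `ZMod (2 * n)`. -/
def len₂ (e : Fin n) : ℕ :=
  if (D.overPt e - D.under e).val = 0 then 2 * n else (D.overPt e - D.under e).val

lemma coe_len₁ [NeZero n] (e : Fin n) :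
    ((D.len₁ e : ℕ) : ZMod (2 * n)) = D.under e - D.overPt e := by
  haveI : NeZero (2 * n) := ⟨by have := NeZero.ne n; omega⟩
  rw [len₁]
  split_ifs with h
  · rw [ZMod.natCast_self]
    exact ((ZMod.val_eq_zero _).mp h).symm
  · exact ZMod.natCast_rightInverse _

lemma coe_len₂ [NeZero n] (e : Fin n) :
    ((D.len₂ e : ℕ) : ZMod (2 * n)) = D.overPt e - D.under e := by
  haveI : NeZero (2 * n) := ⟨by have := NeZero.ne n; omega⟩
  rw [len₂]
  split_ifs with h
  · rw [ZMod.natCast_self]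
    exact ((ZMod.val_eq_zero _).mp h).symm
  · exact ZMod.natCast_rightInverse _

/-- The path `α_e`, from the over-point of `e` to its under-point. -/
def alphaPath [NeZero n] (e : Fin n) : Quiver.Path (⟨e⟩ : DiagVertex D) ⟨e⟩ :=
  (D.segPath (D.overPt e) (D.len₁ e)).cast
    (congrArg DiagVertex.mk (D.c_over e))
    (congrArg (fun z => (⟨D.c z⟩ : DiagVertex D)) (by rw [D.coe_len₁]; ring) |>.trans
      (congrArg DiagVertex.mk (D.c_under e)))

/-- The path `β_e`, from the under-point of `e` to its over-point. -/
def betaPath [NeZero n] (e : Fin n) : Quiver.Path (⟨e⟩ : DiagVertex D) ⟨e⟩ :=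
  (D.segPath (D.under e) (D.len₂ e)).cast
    (congrArg DiagVertex.mk (D.c_under e))
    (congrArg (fun z => (⟨D.c z⟩ : DiagVertex D)) (by rw [D.coe_len₂]; ring) |>.trans
      (congrArg DiagVertex.mk (D.c_over e)))

/-- The positive (over-crossing) fundamental cycle `γ⁺_e = β_e α_e`
(first `α_e`, then `β_e`). -/
def gammaPlus [NeZero n] (e : Fin n) : Quiver.Path (⟨e⟩ : DiagVertex D) ⟨e⟩ :=
  (D.alphaPath e).comp (D.betaPath e)

/-- The negative (under-crossing) fundamental cycle `γ⁻_e = α_e β_e`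
(first `β_e`, then `α_e`). -/
def gammaMinus [NeZero n] (e : Fin n) : Quiver.Path (⟨e⟩ : DiagVertex D) ⟨e⟩ :=
  (D.betaPath e).comp (D.alphaPath e)

end GaussData

variable {n : ℕ}

/-- The element of the path algebra `kQ_D` given by the arrow (segment) `i`. -/
def arrowGen (k : Type) [CommRing k] (D : GaussData n) (i : ZMod (2 * n)) :
    PathAlg k (DiagVertex D) :=
  arrowElem k (DiagVertex D) ⟨⟨D.c i⟩, ⟨D.c (i + 1)⟩, ⟨i, rfl, rfl⟩⟩

/-- The two-sided ideal `I_τ` of `kQ_D`, generated by the Type I relations (composable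
length-2 paths `b ∘ a` with `b ≠ a + 1`) and the Type II relations
`α_e β_e - τ(e) β_e α_e`. -/
def knotIdeal (k : Type) [CommRing k] [NeZero n] (D : GaussData n) (τ : Fin n → kˣ) :
    TwoSidedIdeal (PathAlg k (DiagVertex D)) :=
  TwoSidedIdeal.span
    ({x | ∃ i j : ZMod (2 * n), D.c (i + 1) = D.c j ∧ j ≠ i + 1 ∧
        x = arrowGen k D j * arrowGen k D i} ∪
     {x | ∃ e : Fin n, x = pathElem k (DiagVertex D) (D.gammaMinus e) -
        (τ e : k) • pathElem k (DiagVertex D) (D.gammaPlus e)})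

/-- The defining relations of the algebra `Λ_{D,τ}` of the diagram, as a quotient of the
path algebra `kQ_D`. -/
inductive KnotRel (k : Type) [CommRing k] [NeZero n] (D : GaussData n) (τ : Fin n → kˣ) :
    PathAlg k (DiagVertex D) → PathAlg k (DiagVertex D) → Prop
  | typeI (i j : ZMod (2 * n)) (hcomp : D.c (i + 1) = D.c j) (hne : j ≠ i + 1) :
      KnotRel k D τ (arrowGen k D j * arrowGen k D i) 0
  | typeII (e : Fin n) :
      KnotRel k D τ (pathElem k (DiagVertex D) (D.gammaMinus e))
        ((τ e : k) • pathElem k (DiagVertex D) (D.gammaPlus e))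

/-- The algebra `Λ_{D,τ} = kQ_D / I_τ` of the diagram `D` with respect to `τ`. -/
abbrev KnotAlg (k : Type) [CommRing k] [NeZero n] (D : GaussData n) (τ : Fin n → kˣ) : Type :=
  RingQuot (KnotRel k D τ)

/-- The elements of `Λ_{D,τ}` claimed to form a basis: the trivial paths, the
segment-following paths of length `1 ≤ ℓ ≤ 2n - 1`, and the positive fundamental cycles. -/
def knotBasisFamily (k : Type) [CommRing k] [NeZero n] (D : GaussData n) (τ : Fin n → kˣ) :
    Fin n ⊕ (ZMod (2 * n) × Fin (2 * n - 1)) ⊕ Fin n → KnotAlg k D τ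
  | .inl e => RingQuot.mkAlgHom k (KnotRel k D τ) (vertexElem k (DiagVertex D) ⟨e⟩)
  | .inr (.inl (i, j)) =>
      RingQuot.mkAlgHom k (KnotRel k D τ) (pathElem k (DiagVertex D) (D.segPath i (j.val + 1)))
  | .inr (.inr e) =>
      RingQuot.mkAlgHom k (KnotRel k D τ) (pathElem k (DiagVertex D) (D.gammaPlus e))

/-- The defining relations of the monomial algebra `Ξ_D` of the diagram: the Type I
relations, together with all paths of length `2n + 1` (Type II'). -/
inductive MonRel (k : Type) [CommRing k] [NeZero n] (D : GaussData n) :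
    PathAlg k (DiagVertex D) → PathAlg k (DiagVertex D) → Prop
  | typeI (i j : ZMod (2 * n)) (hcomp : D.c (i + 1) = D.c j) (hne : j ≠ i + 1) :
      MonRel k D (arrowGen k D j * arrowGen k D i) 0
  | typeII' (a b : DiagVertex D) (p : Quiver.Path a b) (hp : p.length = 2 * n + 1) :
      MonRel k D (pathElem k (DiagVertex D) p) 0

/-- The monomial algebra `Ξ_D = kQ_D / J_D` of the diagram `D`. -/
abbrev MonAlg (k : Type) [CommRing k] [NeZero n] (D : GaussData n) : Type :=
  RingQuot (MonRel k D)

/-- The elements of `Ξ_D` claimed to form a basis: the trivial paths and the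
segment-following paths of length `1 ≤ ℓ ≤ 2n`. -/
def monBasisFamily (k : Type) [CommRing k] [NeZero n] (D : GaussData n) :
    Fin n ⊕ (ZMod (2 * n) × Fin (2 * n)) → MonAlg k D
  | .inl e => RingQuot.mkAlgHom k (MonRel k D) (vertexElem k (DiagVertex D) ⟨e⟩)
  | .inr (i, j) =>
      RingQuot.mkAlgHom k (MonRel k D) (pathElem k (DiagVertex D) (D.segPath i (j.val + 1)))


/-! ### Auxiliary development -/

namespace KnotAlgProof

set_option linter.unusedSectionVars false

section PathAlgLemmas

variable (k : Type) [CommRing k] (V : Type) [Quiver.{0} V] [Fintype V] [DecidableEq V]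

lemma vertexElem_mul_vertexElem (a b : V) :
    vertexElem k V a * vertexElem k V b = if a = b then vertexElem k V a else 0 := by
  rw [vertexElem, vertexElem, ← map_mul,
    RingQuot.mkAlgHom_rel k (PathAlgRel.vertex a b), apply_ite (RingQuot.mkAlgHom k _)]
  split_ifs <;> simp [vertexElem]

lemma sum_vertexElem : ∑ a : V, vertexElem k V a = 1 := by
  simp only [vertexElem]
  rw [← map_sum, RingQuot.mkAlgHom_rel k (PathAlgRel.unit), map_one]

lemma arrowElem_mul_vertexElem (f : QuiverArrow V) (v : V) :
    arrowElem k V f * vertexElem k V v = if v = f.1 then arrowElem k V f else 0 := by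
  rw [arrowElem, vertexElem, ← map_mul,
    RingQuot.mkAlgHom_rel k (PathAlgRel.src f v), apply_ite (RingQuot.mkAlgHom k _)]
  split_ifs <;> simp [arrowElem]

lemma vertexElem_mul_arrowElem (f : QuiverArrow V) (v : V) :
    vertexElem k V v * arrowElem k V f = if v = f.2.1 then arrowElem k V f else 0 := by
  rw [arrowElem, vertexElem, ← map_mul,
    RingQuot.mkAlgHom_rel k (PathAlgRel.tgt f v), apply_ite (RingQuot.mkAlgHom k _)]
  split_ifs <;> simp [arrowElem]

lemma pathElem_cast {a b a' b' : V} (ha : a = a') (hb : b = b') (p : Quiver.Path a b) :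
    pathElem k V (p.cast ha hb) = pathElem k V p := by
  subst ha; subst hb; rw [Quiver.Path.cast_rfl_rfl]

lemma pathElem_nil (a : V) :
    pathElem k V (Quiver.Path.nil : Quiver.Path a a) = vertexElem k V a := by
  simp only [pathElem]

lemma pathElem_cons {a b c : V} (p : Quiver.Path a b) (f : b ⟶ c) :
    pathElem k V (p.cons f) = arrowElem k V ⟨b, c, f⟩ * pathElem k V p := by
  simp only [pathElem]

lemma vertexElem_mul_pathElem {a b : V} (v : V) (p : Quiver.Path a b) :
    vertexElem k V v * pathElem k V p = if v = b then pathElem k V p else 0 := by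
  induction p with
  | nil =>
      rw [pathElem_nil, vertexElem_mul_vertexElem]
      by_cases h : v = a
      · subst h; rfl
      · rw [if_neg h, if_neg h]
  | @cons b c p f ih =>
      rw [pathElem_cons, ← mul_assoc, vertexElem_mul_arrowElem]
      split_ifs with h
      · rfl
      · rw [zero_mul]

lemma pathElem_mul_vertexElem {a b : V} (p : Quiver.Path a b) (v : V) :
    pathElem k V p * vertexElem k V v = if v = a then pathElem k V p else 0 := by
  induction p with
  | nil =>
      rw [pathElem_nil, vertexElem_mul_vertexElem]
      by_cases h : v = a
      · subst h; simp
      · rw [if_neg h, if_neg (fun hh => h hh.symm)]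
  | @cons b c p f ih =>
      rw [pathElem_cons, mul_assoc, ih]
      split_ifs with h
      · rfl
      · rw [mul_zero]

lemma pathElem_comp {a b c : V} (p : Quiver.Path a b) (q : Quiver.Path b c) :
    pathElem k V (p.comp q) = pathElem k V q * pathElem k V p := by
  induction q with
  | nil =>
      rw [Quiver.Path.comp_nil, pathElem_nil, vertexElem_mul_pathElem, if_pos rfl]
  | @cons c d q f ih =>
      rw [Quiver.Path.comp_cons, pathElem_cons, pathElem_cons, ih, mul_assoc]

end PathAlgLemmas

section SegLemmas

variable {n : ℕ} [NeZero n] (k : Type) [CommRing k] (D : GaussData n)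

instance : NeZero (2 * n) := ⟨by have := NeZero.ne n; omega⟩

lemma pathElem_segPath_zero (i : ZMod (2 * n)) :
    pathElem k (DiagVertex D) (D.segPath i 0) =
      vertexElem k (DiagVertex D) (⟨D.c i⟩ : DiagVertex D) := by
  rw [GaussData.segPath, pathElem_cast, pathElem_nil]

lemma pathElem_segPath_succ (i : ZMod (2 * n)) (ℓ : ℕ) :
    pathElem k (DiagVertex D) (D.segPath i (ℓ + 1)) =
      arrowGen k D (i + ℓ) * pathElem k (DiagVertex D) (D.segPath i ℓ) := by
  rw [GaussData.segPath, pathElem_cast, pathElem_cons]; rfl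

lemma pathElem_segPath_one (i : ZMod (2 * n)) :
    pathElem k (DiagVertex D) (D.segPath i 1) = arrowGen k D i := by
  have h := pathElem_segPath_succ k D i 0
  rw [pathElem_segPath_zero] at h
  exact h.trans (by
    rw [show ((0 : ℕ) : ZMod (2 * n)) = 0 from Nat.cast_zero, add_zero, arrowGen,
      arrowElem_mul_vertexElem, if_pos rfl])

lemma pathElem_segPath_add (i : ZMod (2 * n)) (a b : ℕ) :
    pathElem k (DiagVertex D) (D.segPath i (a + b)) =
      pathElem k (DiagVertex D) (D.segPath (i + a) b) *
        pathElem k (DiagVertex D) (D.segPath i a) := by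
  induction b with
  | zero =>
      rw [Nat.add_zero, pathElem_segPath_zero, vertexElem_mul_pathElem, if_pos rfl]
  | succ b ih =>
      rw [show a + (b + 1) = (a + b) + 1 from rfl, pathElem_segPath_succ, ih,
        pathElem_segPath_succ, Nat.cast_add, ← add_assoc, mul_assoc]

lemma pathElem_segPath_congr {i i' : ZMod (2 * n)} {a a' : ℕ} (h1 : i = i') (h2 : a = a') :
    pathElem k (DiagVertex D) (D.segPath i a) = pathElem k (DiagVertex D) (D.segPath i' a') := by
  subst h1; subst h2; rfl

end SegLemmas

section GaussLemmas

variable {n : ℕ} [NeZero n] (D : GaussData n)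

lemma over_ne_under (e : Fin n) : D.overPt e ≠ D.under e := fun h => by
  have := D.bij.1 (a₁ := Sum.inl e) (a₂ := Sum.inr e) (by simpa using h)
  simp at this

lemma over_or_under (i : ZMod (2 * n)) :
    i = D.overPt (D.c i) ∨ i = D.under (D.c i) := by
  obtain ⟨x, hx⟩ := D.bij.2 i
  cases x with
  | inl e =>
      left
      have he : D.overPt e = i := hx
      rw [← he, D.c_over]
  | inr e =>
      right
      have he : D.under e = i := hx
      rw [← he, D.c_under]

lemma len₁_add_len₂ (e : Fin n) : D.len₁ e + D.len₂ e = 2 * n := by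
  have hne : D.under e - D.overPt e ≠ 0 :=
    sub_ne_zero.mpr (fun h => over_ne_under D e h.symm)
  have hval : (D.under e - D.overPt e).val ≠ 0 := fun h => hne ((ZMod.val_eq_zero _).mp h)
  have hlt : (D.under e - D.overPt e).val < 2 * n := ZMod.val_lt _
  rw [GaussData.len₁, GaussData.len₂, if_neg hval,
    show D.overPt e - D.under e = -(D.under e - D.overPt e) by ring, ZMod.neg_val, if_neg hne]
  split_ifs with h <;> omega

lemma len₁_pos (e : Fin n) : 0 < D.len₁ e := by
  rw [GaussData.len₁]; split_ifs with h
  · have := NeZero.ne n; omega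
  · omega

lemma len₂_pos (e : Fin n) : 0 < D.len₂ e := by
  rw [GaussData.len₂]; split_ifs with h
  · have := NeZero.ne n; omega
  · omega

lemma over_add_len₁ (e : Fin n) :
    D.overPt e + ((D.len₁ e : ℕ) : ZMod (2 * n)) = D.under e := by
  rw [D.coe_len₁]; ring

lemma under_add_len₂ (e : Fin n) :
    D.under e + ((D.len₂ e : ℕ) : ZMod (2 * n)) = D.overPt e := by
  rw [D.coe_len₂]; ring

variable (k : Type) [CommRing k]

lemma pathElem_alphaPath (e : Fin n) :
    pathElem k (DiagVertex D) (D.alphaPath e) =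
      pathElem k (DiagVertex D) (D.segPath (D.overPt e) (D.len₁ e)) := by
  rw [GaussData.alphaPath, pathElem_cast]

lemma pathElem_betaPath (e : Fin n) :
    pathElem k (DiagVertex D) (D.betaPath e) =
      pathElem k (DiagVertex D) (D.segPath (D.under e) (D.len₂ e)) := by
  rw [GaussData.betaPath, pathElem_cast]

lemma pathElem_gammaPlus (e : Fin n) :
    pathElem k (DiagVertex D) (D.gammaPlus e) =
      pathElem k (DiagVertex D) (D.segPath (D.overPt e) (2 * n)) := by
  rw [GaussData.gammaPlus, pathElem_comp, pathElem_alphaPath, pathElem_betaPath,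
    show D.under e = D.overPt e + ((D.len₁ e : ℕ) : ZMod (2 * n)) from (over_add_len₁ D e).symm,
    ← pathElem_segPath_add, len₁_add_len₂]

lemma pathElem_gammaMinus (e : Fin n) :
    pathElem k (DiagVertex D) (D.gammaMinus e) =
      pathElem k (DiagVertex D) (D.segPath (D.under e) (2 * n)) := by
  rw [GaussData.gammaMinus, pathElem_comp, pathElem_alphaPath, pathElem_betaPath,
    show D.overPt e = D.under e + ((D.len₂ e : ℕ) : ZMod (2 * n)) from (under_add_len₂ D e).symm,
    ← pathElem_segPath_add, Nat.add_comm, len₁_add_len₂]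

end GaussLemmas


section KnotLemmas

variable {n : ℕ} [NeZero n] (k : Type) [CommRing k] (D : GaussData n) (τ : Fin n → kˣ)

lemma arrowGen_ne_comp (i j : ZMod (2 * n)) (h : D.c (i + 1) ≠ D.c j) :
    arrowGen k D j * arrowGen k D i = 0 := by
  have h1 : arrowGen k D j * vertexElem k (DiagVertex D) ⟨D.c j⟩ = arrowGen k D j := by
    rw [arrowGen, arrowElem_mul_vertexElem, if_pos rfl]
  have h2 : vertexElem k (DiagVertex D) ⟨D.c (i + 1)⟩ * arrowGen k D i = arrowGen k D i := by
    rw [arrowGen, vertexElem_mul_arrowElem, if_pos rfl]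
  conv_lhs => rw [← h1, ← h2]
  rw [mul_assoc, ← mul_assoc (vertexElem k (DiagVertex D) ⟨D.c j⟩), vertexElem_mul_vertexElem,
    if_neg (fun hh => h (congrArg DiagVertex.val hh).symm), zero_mul, mul_zero]

lemma AG_mul_AG (i j : ZMod (2 * n)) (h : j ≠ i + 1) :
    RingQuot.mkAlgHom k (KnotRel k D τ) (arrowGen k D j) *
      RingQuot.mkAlgHom k (KnotRel k D τ) (arrowGen k D i) = 0 := by
  rw [← map_mul]
  by_cases hc : D.c (i + 1) = D.c j
  · rw [RingQuot.mkAlgHom_rel k (KnotRel.typeI i j hc h), map_zero]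
  · rw [arrowGen_ne_comp k D i j hc, map_zero]

lemma AG_mul_seg (i : ZMod (2 * n)) (ℓ : ℕ) (j : ZMod (2 * n)) :
    RingQuot.mkAlgHom k (KnotRel k D τ) (arrowGen k D j) *
      RingQuot.mkAlgHom k (KnotRel k D τ) (pathElem k (DiagVertex D) (D.segPath i (ℓ + 1))) =
    if j = i + ℓ + 1 then
      RingQuot.mkAlgHom k (KnotRel k D τ) (pathElem k (DiagVertex D) (D.segPath i (ℓ + 2)))
    else 0 := by
  split_ifs with h
  · subst h
    rw [← map_mul]
    congr 1
    have harg : i + ((ℓ : ℕ) : ZMod (2 * n)) + 1 = i + (((ℓ + 1 : ℕ)) : ZMod (2 * n)) := by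
      push_cast; ring
    conv_rhs => rw [pathElem_segPath_congr k D (rfl : i = i) (show ℓ + 2 = (ℓ + 1) + 1 from rfl),
      pathElem_segPath_succ]
    rw [harg]
  · rw [pathElem_segPath_succ, map_mul, ← mul_assoc, AG_mul_AG k D τ _ _ h, zero_mul]

/-- The scalar attached to the full cycle starting at position `i`. -/
def scal (i : ZMod (2 * n)) : k :=
  if i = D.overPt (D.c i) then 1 else (τ (D.c i) : k)

lemma seg_full (i : ZMod (2 * n)) :
    RingQuot.mkAlgHom k (KnotRel k D τ) (pathElem k (DiagVertex D) (D.segPath i (2 * n))) =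
      scal k D τ i •
        RingQuot.mkAlgHom k (KnotRel k D τ) (pathElem k (DiagVertex D) (D.gammaPlus (D.c i))) := by
  rcases over_or_under D i with h | h
  · simp only [scal, if_pos h, one_smul]
    conv_lhs => rw [h]
    rw [← pathElem_gammaPlus]
  · have hne : i ≠ D.overPt (D.c i) := by
      intro hh; exact over_ne_under D (D.c i) (by rw [← hh, ← h])
    simp only [scal, if_neg hne]
    conv_lhs => rw [h]
    rw [← pathElem_gammaMinus, RingQuot.mkAlgHom_rel k (KnotRel.typeII (D.c i)), map_smul]

lemma seg_2n_peel (i : ZMod (2 * n)) :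
    pathElem k (DiagVertex D) (D.segPath i (2 * n)) =
      pathElem k (DiagVertex D) (D.segPath (i + 1) (2 * n - 1)) * arrowGen k D i := by
  have h2n : 2 * n = 1 + (2 * n - 1) := by have := NeZero.ne n; omega
  rw [pathElem_segPath_congr k D (rfl : i = i) h2n, pathElem_segPath_add, pathElem_segPath_one,
    pathElem_segPath_congr k D (show i + ((1 : ℕ) : ZMod (2 * n)) = i + 1 by push_cast; ring)
      (rfl : 2 * n - 1 = 2 * n - 1)]

lemma seg_overflow (i : ZMod (2 * n)) :
    RingQuot.mkAlgHom k (KnotRel k D τ)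
      (pathElem k (DiagVertex D) (D.segPath i (2 * n + 1))) = 0 := by
  rw [pathElem_segPath_congr k D (rfl : i = i) (show 2 * n + 1 = 1 + 2 * n from by omega),
    pathElem_segPath_add, pathElem_segPath_one, map_mul,
    pathElem_segPath_congr k D (show i + ((1 : ℕ) : ZMod (2 * n)) = i + 1 by push_cast; ring)
      (rfl : 2 * n = 2 * n), seg_full, smul_mul_assoc]
  suffices h : RingQuot.mkAlgHom k (KnotRel k D τ)
      (pathElem k (DiagVertex D) (D.gammaPlus (D.c (i + 1)))) *
      RingQuot.mkAlgHom k (KnotRel k D τ) (arrowGen k D i) = 0 by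
    rw [h, smul_zero]
  set e' := D.c (i + 1) with he'
  by_cases hov : D.overPt e' = i + 1
  · have hstep : RingQuot.mkAlgHom k (KnotRel k D τ) (pathElem k (DiagVertex D) (D.gammaPlus e')) =
        (((τ e')⁻¹ : kˣ) : k) • RingQuot.mkAlgHom k (KnotRel k D τ)
          (pathElem k (DiagVertex D) (D.gammaMinus e')) := by
      rw [RingQuot.mkAlgHom_rel k (KnotRel.typeII e'), map_smul, smul_smul, Units.inv_mul,
        one_smul]
    rw [hstep, smul_mul_assoc]
    have hzero : RingQuot.mkAlgHom k (KnotRel k D τ)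
        (pathElem k (DiagVertex D) (D.gammaMinus e')) *
        RingQuot.mkAlgHom k (KnotRel k D τ) (arrowGen k D i) = 0 := by
      rw [pathElem_gammaMinus, seg_2n_peel, map_mul, mul_assoc,
        AG_mul_AG k D τ _ _ (fun hh => over_ne_under D e' (by rw [hov, ← hh])), mul_zero]
    rw [hzero, smul_zero]
  · rw [pathElem_gammaPlus, seg_2n_peel, map_mul, mul_assoc, AG_mul_AG k D τ _ _ hov, mul_zero]

lemma AG_mul_gammaPlus (i : ZMod (2 * n)) (e : Fin n) :
    RingQuot.mkAlgHom k (KnotRel k D τ) (arrowGen k D i) *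
      RingQuot.mkAlgHom k (KnotRel k D τ) (pathElem k (DiagVertex D) (D.gammaPlus e)) = 0 := by
  obtain ⟨m, hm⟩ : ∃ m, 2 * n = m + 1 := ⟨2 * n - 1, by have := NeZero.ne n; omega⟩
  rw [pathElem_gammaPlus, pathElem_segPath_congr k D (rfl : D.overPt e = D.overPt e) hm, AG_mul_seg]
  split_ifs with h
  · rw [pathElem_segPath_congr k D (rfl : D.overPt e = D.overPt e)
      (show m + 2 = 2 * n + 1 by omega), seg_overflow]
  · rfl

end KnotLemmas

section Spanning

variable {n : ℕ} [NeZero n] (k : Type) [CommRing k] (D : GaussData n) (τ : Fin n → kˣ)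

lemma vtx_mul_basis_mem (v : DiagVertex D) (s) :
    RingQuot.mkAlgHom k (KnotRel k D τ) (vertexElem k (DiagVertex D) v) *
        knotBasisFamily k D τ s ∈
      Submodule.span k (Set.range (knotBasisFamily k D τ)) := by
  rcases s with e | ⟨i, j⟩ | e
  · rw [knotBasisFamily, ← map_mul, vertexElem_mul_vertexElem, apply_ite (RingQuot.mkAlgHom k (KnotRel k D τ)), map_zero]
    split_ifs with h
    · exact Submodule.subset_span ⟨Sum.inl e, by rw [knotBasisFamily, h]⟩
    · exact Submodule.zero_mem _
  · rw [knotBasisFamily, ← map_mul, vertexElem_mul_pathElem, apply_ite (RingQuot.mkAlgHom k (KnotRel k D τ)), map_zero]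
    split_ifs
    · exact Submodule.subset_span ⟨Sum.inr (Sum.inl (i, j)), rfl⟩
    · exact Submodule.zero_mem _
  · rw [knotBasisFamily, ← map_mul, vertexElem_mul_pathElem, apply_ite (RingQuot.mkAlgHom k (KnotRel k D τ)), map_zero]
    split_ifs
    · exact Submodule.subset_span ⟨Sum.inr (Sum.inr e), rfl⟩
    · exact Submodule.zero_mem _

lemma AG_mul_basis_mem (i : ZMod (2 * n)) (s) :
    RingQuot.mkAlgHom k (KnotRel k D τ) (arrowGen k D i) * knotBasisFamily k D τ s ∈
      Submodule.span k (Set.range (knotBasisFamily k D τ)) := by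
  rcases s with e | ⟨i', j⟩ | e
  · rw [knotBasisFamily, ← map_mul, arrowGen, arrowElem_mul_vertexElem, apply_ite (RingQuot.mkAlgHom k (KnotRel k D τ)), map_zero]
    split_ifs
    · have h0 : (0 : ℕ) < 2 * n - 1 ∨ True := Or.inr trivial
      refine Submodule.subset_span ⟨Sum.inr (Sum.inl (i, ⟨0, ?_⟩)), ?_⟩
      · have := NeZero.ne n; omega
      · rw [knotBasisFamily, pathElem_segPath_one]; rfl
    · exact Submodule.zero_mem _
  · rw [knotBasisFamily, AG_mul_seg]
    split_ifs with h
    · by_cases hj : j.val + 1 < 2 * n - 1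
      · exact Submodule.subset_span ⟨Sum.inr (Sum.inl (i', ⟨j.val + 1, hj⟩)), rfl⟩
      · have hful : j.val + 2 = 2 * n := by have := j.isLt; omega
        rw [pathElem_segPath_congr k D (rfl : i' = i') hful, seg_full]
        exact Submodule.smul_mem _ _ (Submodule.subset_span ⟨Sum.inr (Sum.inr (D.c i')), rfl⟩)
    · exact Submodule.zero_mem _
  · rw [knotBasisFamily, AG_mul_gammaPlus]
    exact Submodule.zero_mem _

lemma one_mem_span :
    (1 : KnotAlg k D τ) ∈ Submodule.span k (Set.range (knotBasisFamily k D τ)) := by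
  have h1 : (1 : KnotAlg k D τ) =
      ∑ a : DiagVertex D,
        RingQuot.mkAlgHom k (KnotRel k D τ) (vertexElem k (DiagVertex D) a) := by
    rw [← map_sum, sum_vertexElem, map_one]
  rw [h1]
  exact Submodule.sum_mem _ fun a _ => Submodule.subset_span ⟨Sum.inl a.val, rfl⟩

lemma span_knotBasis_eq_top :
    Submodule.span k (Set.range (knotBasisFamily k D τ)) = ⊤ := by
  set S := Submodule.span k (Set.range (knotBasisFamily k D τ)) with hS
  rw [eq_top_iff]
  rintro x -
  set π : FreeAlgebra k (DiagVertex D ⊕ QuiverArrow (DiagVertex D)) →ₐ[k] KnotAlg k D τ :=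
    (RingQuot.mkAlgHom k (KnotRel k D τ)).comp
      (RingQuot.mkAlgHom k (PathAlgRel k (DiagVertex D))) with hπ
  have hsurj : Function.Surjective π := by
    exact (RingQuot.mkAlgHom_surjective k (KnotRel k D τ)).comp
      (RingQuot.mkAlgHom_surjective k (PathAlgRel k (DiagVertex D)))
  obtain ⟨y, rfl⟩ := hsurj x
  have key : ∀ y, ∀ z ∈ S, π y * z ∈ S := by
    intro y
    induction y using FreeAlgebra.induction with
    | grade0 r =>
        intro z hz
        rw [AlgHom.commutes, ← Algebra.smul_def]
        exact S.smul_mem r hz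
    | grade1 x =>
        intro z hz
        have hred : ∀ g : KnotAlg k D τ, (∀ s, g * knotBasisFamily k D τ s ∈ S) → g * z ∈ S := by
          intro g hg
          have hle : S ≤ Submodule.comap (LinearMap.mulLeft k g) S := by
            rw [hS]
            refine Submodule.span_le.mpr ?_
            rintro _ ⟨s, rfl⟩
            exact hg s
          exact hle hz
        cases x with
        | inl v =>
            have hval : π (FreeAlgebra.ι k (Sum.inl v)) =
                RingQuot.mkAlgHom k (KnotRel k D τ) (vertexElem k (DiagVertex D) v) := rfl
            rw [hval]
            exact hred _ (vtx_mul_basis_mem k D τ v)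
        | inr f =>
            obtain ⟨⟨av⟩, ⟨bv⟩, i, h1, h2⟩ := f
            have h1' : av = D.c i := h1.symm
            have h2' : bv = D.c (i + 1) := h2.symm
            subst h1'; subst h2'
            have hval : π (FreeAlgebra.ι k
                (Sum.inr (⟨⟨D.c i⟩, ⟨D.c (i + 1)⟩, i, rfl, rfl⟩ :
                  QuiverArrow (DiagVertex D)))) =
                RingQuot.mkAlgHom k (KnotRel k D τ) (arrowGen k D i) := rfl
            rw [hval]
            exact hred _ (AG_mul_basis_mem k D τ i)
    | mul a b ha hb =>
        intro z hz
        rw [map_mul, mul_assoc]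
        exact ha _ (hb z hz)
    | add a b ha hb =>
        intro z hz
        rw [map_add, add_mul]
        exact S.add_mem (ha z hz) (hb z hz)
  have := key y 1 (one_mem_span k D τ)
  simpa using this

end Spanning


section Representation

variable {n : ℕ} [NeZero n] (k : Type) [CommRing k] (D : GaussData n) (τ : Fin n → kˣ)

/-- The index type of the claimed basis. -/
abbrev KIdx (n : ℕ) : Type := Fin n ⊕ (ZMod (2 * n) × Fin (2 * n - 1)) ⊕ Fin n

/-- The crossing at which the path indexed by `s` ends. -/
def tgtIdx : KIdx n → Fin n
  | .inl e => e
  | .inr (.inl (i, j)) => D.c (i + ((j.val + 1 : ℕ) : ZMod (2 * n)))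
  | .inr (.inr e) => e

/-- Action of the vertex idempotent `e_v` on a basis vector. -/
def vAct (v : Fin n) (s : KIdx n) : KIdx n → k :=
  if tgtIdx D s = v then Pi.single s 1 else 0

/-- Action of the arrow `a_i` on a basis vector. -/
def aAct (i : ZMod (2 * n)) : KIdx n → (KIdx n → k)
  | .inl e =>
      if D.c i = e then
        Pi.single (Sum.inr (Sum.inl (i, ⟨0, by have := NeZero.ne n; omega⟩))) 1
      else 0
  | .inr (.inl (i', j)) =>
      if i = i' + ((j.val + 1 : ℕ) : ZMod (2 * n)) then
        if h : j.val + 1 < 2 * n - 1 then Pi.single (Sum.inr (Sum.inl (i', ⟨j.val + 1, h⟩))) 1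
        else scal k D τ i' • (Pi.single (Sum.inr (Sum.inr (D.c i'))) 1 : KIdx n → k)
      else 0
  | .inr (.inr _) => 0

noncomputable def Vop (v : Fin n) : Module.End k (KIdx n → k) :=
  (Pi.basisFun k (KIdx n)).constr k (vAct k D v)

noncomputable def Aop (i : ZMod (2 * n)) : Module.End k (KIdx n → k) :=
  (Pi.basisFun k (KIdx n)).constr k (aAct k D τ i)

lemma Vop_single (v : Fin n) (s : KIdx n) :
    Vop k D v (Pi.single s 1) = vAct k D v s := by
  rw [Vop, ← Pi.basisFun_apply, Module.Basis.constr_basis]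

lemma Aop_single (i : ZMod (2 * n)) (s : KIdx n) :
    Aop k D τ i (Pi.single s 1) = aAct k D τ i s := by
  rw [Aop, ← Pi.basisFun_apply, Module.Basis.constr_basis]

lemma aAct_eq_zero_of_tgt_ne (i : ZMod (2 * n)) (s : KIdx n)
    (h : tgtIdx D s ≠ D.c i) : aAct k D τ i s = 0 := by
  rcases s with e | ⟨i', j⟩ | e
  · simp only [aAct]; rw [if_neg (fun hh => h (by simp only [tgtIdx]; rw [← hh]))]
  · simp only [aAct]; rw [if_neg (fun hh => h (by simp only [tgtIdx]; rw [← hh]))]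
  · rfl

lemma Vop_single' (w : Fin n) (t : KIdx n) :
    Vop k D w (Pi.single t 1) = if tgtIdx D t = w then (Pi.single t 1 : KIdx n → k) else 0 := by
  rw [Vop_single, vAct]

lemma tgt_aAct_inl (i : ZMod (2 * n)) :
    tgtIdx D (Sum.inr (Sum.inl (i, (⟨0, by have := NeZero.ne n; omega⟩ : Fin (2 * n - 1)))) :
      KIdx n) = D.c (i + 1) := by
  simp only [tgtIdx]; norm_num

lemma tgt_aAct_mid (i i' : ZMod (2 * n)) (j : Fin (2 * n - 1)) (hj : j.val + 1 < 2 * n - 1)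
    (h1 : i = i' + ((j.val + 1 : ℕ) : ZMod (2 * n))) :
    tgtIdx D (Sum.inr (Sum.inl (i', (⟨j.val + 1, hj⟩ : Fin (2 * n - 1)))) : KIdx n) =
      D.c (i + 1) := by
  simp only [tgtIdx]; rw [h1]; congr 1; push_cast; ring

lemma tgt_aAct_top (i i' : ZMod (2 * n)) (j : Fin (2 * n - 1)) (hj : ¬ j.val + 1 < 2 * n - 1)
    (h1 : i = i' + ((j.val + 1 : ℕ) : ZMod (2 * n))) :
    tgtIdx D (Sum.inr (Sum.inr (D.c i')) : KIdx n) = D.c (i + 1) := by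
  have hj' : j.val + 1 = 2 * n - 1 := by have := j.isLt; omega
  simp only [tgtIdx]; rw [h1, hj']
  congr 1
  have hz : ((2 * n - 1 : ℕ) : ZMod (2 * n)) + 1 = 0 := by
    rw [show ((2 * n - 1 : ℕ) : ZMod (2 * n)) + 1 = ((2 * n - 1 + 1 : ℕ) : ZMod (2 * n))
      by push_cast; ring, show 2 * n - 1 + 1 = 2 * n by have := NeZero.ne n; omega,
      ZMod.natCast_self]
  rw [add_assoc, hz, add_zero]

lemma Vop_aAct (w : Fin n) (i : ZMod (2 * n)) (s : KIdx n) :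
    Vop k D w (aAct k D τ i s) =
      if w = D.c (i + 1) then aAct k D τ i s else 0 := by
  have key : ∀ x : KIdx n → k,
      Vop k D w x = x → (if w = D.c (i + 1) then x else 0) = x ∨ True := fun _ _ => Or.inr trivial
  rcases s with e | ⟨i', j⟩ | e
  · by_cases h1 : D.c i = e
    · simp only [aAct, if_pos h1]
      rw [Vop_single', tgt_aAct_inl]
      by_cases h2 : w = D.c (i + 1)
      · rw [if_pos h2.symm, if_pos h2]
      · rw [if_neg (fun hh => h2 hh.symm), if_neg h2]
    · simp only [aAct, if_neg h1]
      rw [map_zero, ite_self]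
  · by_cases h1 : i = i' + ((j.val + 1 : ℕ) : ZMod (2 * n))
    · rcases Nat.lt_or_ge (j.val + 1) (2 * n - 1) with hj | hj
      · simp only [aAct, if_pos h1, dif_pos hj]
        rw [Vop_single', tgt_aAct_mid D i i' j hj h1]
        by_cases h2 : w = D.c (i + 1)
        · rw [if_pos h2.symm, if_pos h2]
        · rw [if_neg (fun hh => h2 hh.symm), if_neg h2]
      · have hj' : ¬ j.val + 1 < 2 * n - 1 := Nat.not_lt.mpr hj
        simp only [aAct, if_pos h1, dif_neg hj']
        rw [map_smul, Vop_single', tgt_aAct_top D i i' j hj' h1]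
        by_cases h2 : w = D.c (i + 1)
        · rw [if_pos h2.symm, if_pos h2]
        · rw [if_neg (fun hh => h2 hh.symm), smul_zero, if_neg h2]
    · simp only [aAct, if_neg h1]
      rw [map_zero, ite_self]
  · simp only [aAct]
    rw [map_zero, ite_self]

lemma Aop_aAct_zero (i j : ZMod (2 * n)) (hne : j ≠ i + 1) (s : KIdx n) :
    Aop k D τ j (aAct k D τ i s) = 0 := by
  rcases s with e | ⟨i', j'⟩ | e
  · by_cases h1 : D.c i = e
    · simp only [aAct, if_pos h1]
      rw [Aop_single]
      simp only [aAct]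
      rw [if_neg (fun hh => hne (by rw [hh]; norm_num))]
    · simp only [aAct, if_neg h1]; rw [map_zero]
  · by_cases h1 : i = i' + ((j'.val + 1 : ℕ) : ZMod (2 * n))
    · rcases Nat.lt_or_ge (j'.val + 1) (2 * n - 1) with hj | hj
      · simp only [aAct, if_pos h1, dif_pos hj]
        rw [Aop_single]
        simp only [aAct]
        rw [if_neg (fun hh => hne (by rw [hh, h1]; push_cast; ring))]
      · have hj' : ¬ j'.val + 1 < 2 * n - 1 := Nat.not_lt.mpr hj
        simp only [aAct, if_pos h1, dif_neg hj']
        rw [map_smul, Aop_single, show aAct k D τ j (Sum.inr (Sum.inr (D.c i'))) = 0 from rfl,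
          smul_zero]
    · simp only [aAct, if_neg h1]; rw [map_zero]
  · simp only [aAct]; rw [map_zero]


/-! #### The representation of the path algebra -/

noncomputable def genAct : DiagVertex D ⊕ QuiverArrow (DiagVertex D) → Module.End k (KIdx n → k)
  | .inl v => Vop k D v.val
  | .inr f => Aop k D τ f.2.2.val

noncomputable def rho0 :
    FreeAlgebra k (DiagVertex D ⊕ QuiverArrow (DiagVertex D)) →ₐ[k] Module.End k (KIdx n → k) :=
  FreeAlgebra.lift k (genAct k D τ)

lemma Vop_vAct_same (v : Fin n) (s : KIdx n) :
    Vop k D v (vAct k D v s) = vAct k D v s := by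
  rw [vAct]
  split_ifs with h
  · rw [Vop_single', if_pos h]
  · rw [map_zero]

lemma Vop_vAct_ne (w v : Fin n) (hne : w ≠ v) (s : KIdx n) :
    Vop k D w (vAct k D v s) = 0 := by
  rw [vAct]
  split_ifs with h
  · rw [Vop_single', if_neg (by rw [h]; exact fun hh => hne hh.symm)]
  · rw [map_zero]

lemma rho0_rel : ∀ ⦃x y⦄, PathAlgRel k (DiagVertex D) x y → rho0 k D τ x = rho0 k D τ y := by
  intro x y h
  induction h with
  | vertex a b =>
      rw [map_mul, apply_ite (rho0 k D τ), map_zero]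
      simp only [rho0, FreeAlgebra.lift_ι_apply, genAct]
      by_cases hab : a = b
      · subst hab
        rw [if_pos rfl]
        refine Module.Basis.ext (Pi.basisFun k (KIdx n)) fun s => ?_
        rw [Pi.basisFun_apply, Module.End.mul_apply, Vop_single, Vop_vAct_same]
      · rw [if_neg hab]
        refine Module.Basis.ext (Pi.basisFun k (KIdx n)) fun s => ?_
        rw [Pi.basisFun_apply, Module.End.mul_apply, Vop_single,
          Vop_vAct_ne k D _ _ (fun hh => hab (DiagVertex.ext hh)), LinearMap.zero_apply]
  | unit =>
      rw [map_sum, map_one]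
      simp only [rho0, FreeAlgebra.lift_ι_apply, genAct]
      refine Module.Basis.ext (Pi.basisFun k (KIdx n)) fun s => ?_
      rw [Pi.basisFun_apply, LinearMap.sum_apply, Module.End.one_apply]
      have hre := Fintype.sum_equiv
        (⟨DiagVertex.val, DiagVertex.mk, fun _ => rfl, fun _ => rfl⟩ :
          DiagVertex D ≃ Fin n)
        (fun a : DiagVertex D => Vop k D a.val (Pi.single s 1))
        (fun v : Fin n => Vop k D v (Pi.single s 1)) (fun a => rfl)
      rw [hre]
      have : ∀ v : Fin n, Vop k D v (Pi.single s 1) =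
          if tgtIdx D s = v then (Pi.single s 1 : KIdx n → k) else 0 := fun v => Vop_single' k D v s
      rw [Finset.sum_congr rfl (fun v _ => this v), Finset.sum_ite_eq,
        if_pos (Finset.mem_univ _)]
  | src f v =>
      obtain ⟨a, b, i, h1, h2⟩ := f
      rw [map_mul, apply_ite (rho0 k D τ), map_zero]
      simp only [rho0, FreeAlgebra.lift_ι_apply, genAct]
      by_cases hv : v = a
      · rw [if_pos hv]
        refine Module.Basis.ext (Pi.basisFun k (KIdx n)) fun s => ?_
        rw [Pi.basisFun_apply, Module.End.mul_apply, Vop_single, vAct]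
        split_ifs with h
        · rw [Aop_single]
        · rw [map_zero, Aop_single,
            aAct_eq_zero_of_tgt_ne k D τ _ _ (by rw [h1, ← hv]; exact h)]
      · rw [if_neg hv]
        refine Module.Basis.ext (Pi.basisFun k (KIdx n)) fun s => ?_
        rw [Pi.basisFun_apply, Module.End.mul_apply, Vop_single, vAct, LinearMap.zero_apply]
        split_ifs with h
        · rw [Aop_single]
          refine aAct_eq_zero_of_tgt_ne k D τ _ _ ?_
          rw [h, h1]
          exact fun hh => hv (DiagVertex.ext hh)
        · rw [map_zero]
  | tgt f v =>
      obtain ⟨a, b, i, h1, h2⟩ := f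
      rw [map_mul, apply_ite (rho0 k D τ), map_zero]
      simp only [rho0, FreeAlgebra.lift_ι_apply, genAct]
      by_cases hv : v = b
      · rw [if_pos hv]
        refine Module.Basis.ext (Pi.basisFun k (KIdx n)) fun s => ?_
        rw [Pi.basisFun_apply, Module.End.mul_apply, Aop_single, Vop_aAct,
          if_pos (by rw [hv, ← h2])]
      · rw [if_neg hv]
        refine Module.Basis.ext (Pi.basisFun k (KIdx n)) fun s => ?_
        rw [Pi.basisFun_apply, Module.End.mul_apply, Aop_single, Vop_aAct,
          if_neg (fun hh => hv (DiagVertex.ext (by rw [← h2, ← hh]))), LinearMap.zero_apply]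

noncomputable def rho1 : PathAlg k (DiagVertex D) →ₐ[k] Module.End k (KIdx n → k) :=
  RingQuot.liftAlgHom k ⟨rho0 k D τ, rho0_rel k D τ⟩

lemma rho1_mk (x : FreeAlgebra k (DiagVertex D ⊕ QuiverArrow (DiagVertex D))) :
    rho1 k D τ (RingQuot.mkAlgHom k (PathAlgRel k (DiagVertex D)) x) = rho0 k D τ x :=
  RingQuot.liftAlgHom_mkAlgHom_apply k _ _ x

lemma rho1_vtx (v : DiagVertex D) :
    rho1 k D τ (vertexElem k (DiagVertex D) v) = Vop k D v.val := by
  rw [vertexElem, rho1_mk]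
  simp only [rho0, FreeAlgebra.lift_ι_apply, genAct]

lemma rho1_AG (i : ZMod (2 * n)) :
    rho1 k D τ (arrowGen k D i) = Aop k D τ i := by
  rw [arrowGen, arrowElem, rho1_mk]
  simp only [rho0, FreeAlgebra.lift_ι_apply, genAct]

/-! #### The key evaluation lemma -/

noncomputable def outVec (i : ZMod (2 * n)) (ℓ : ℕ) : KIdx n → k :=
  if h : ℓ - 1 < 2 * n - 1 then Pi.single (Sum.inr (Sum.inl (i, ⟨ℓ - 1, h⟩))) 1
  else scal k D τ i • (Pi.single (Sum.inr (Sum.inr (D.c i))) 1 : KIdx n → k)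

noncomputable def segVec (i : ZMod (2 * n)) (ℓ : ℕ) : KIdx n → (KIdx n → k)
  | .inl e => if D.c i = e then outVec k D τ i ℓ else 0
  | .inr (.inl (i', j')) =>
      if i = i' + ((j'.val + 1 : ℕ) : ZMod (2 * n)) ∧ j'.val + 1 + ℓ ≤ 2 * n then
        outVec k D τ i' (j'.val + 1 + ℓ)
      else 0
  | .inr (.inr _) => 0

lemma aAct_eq_segVec (i : ZMod (2 * n)) (s : KIdx n) :
    aAct k D τ i s = segVec k D τ i 1 s := by
  rcases s with e | ⟨i', j'⟩ | e
  · simp only [aAct, segVec, outVec]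
    rw [dif_pos (show 1 - 1 < 2 * n - 1 from by have := NeZero.ne n; omega)]
  · simp only [aAct, segVec, outVec]
    by_cases h1 : i = i' + ((j'.val + 1 : ℕ) : ZMod (2 * n))
    · rw [if_pos h1, if_pos ⟨h1, by have := j'.isLt; omega⟩]
      by_cases hj : j'.val + 1 < 2 * n - 1
      · rw [dif_pos hj, dif_pos (show j'.val + 1 + 1 - 1 < 2 * n - 1 from by omega)]
        exact congrArg (fun t : Fin (2 * n - 1) =>
          (Pi.single (Sum.inr (Sum.inl (i', t))) 1 : KIdx n → k))
          (Fin.ext (show (j'.val + 1 : ℕ) = j'.val + 1 + 1 - 1 by omega))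
      · rw [dif_neg hj, dif_neg (show ¬ j'.val + 1 + 1 - 1 < 2 * n - 1 from by omega)]
    · rw [if_neg h1, if_neg (fun hh => h1 hh.1)]
  · rfl

lemma Aop_outVec (i0 : ZMod (2 * n)) (m : ℕ) (h1 : 1 ≤ m) (h2 : m ≤ 2 * n) :
    Aop k D τ (i0 + ((m : ℕ) : ZMod (2 * n))) (outVec k D τ i0 m) =
      if m < 2 * n then outVec k D τ i0 (m + 1) else 0 := by
  by_cases hm : m < 2 * n
  · rw [if_pos hm, outVec, dif_pos (show m - 1 < 2 * n - 1 from by omega), Aop_single]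
    simp only [aAct]
    rw [if_pos (by rw [show m - 1 + 1 = m from by omega])]
    by_cases hc : m - 1 + 1 < 2 * n - 1
    · rw [dif_pos hc, outVec, dif_pos (show m + 1 - 1 < 2 * n - 1 from by omega)]
      have : (⟨m - 1 + 1, hc⟩ : Fin (2 * n - 1)) = ⟨m + 1 - 1, by omega⟩ := by
        apply Fin.ext
        show m - 1 + 1 = m + 1 - 1
        omega
      rw [this]
    · rw [dif_neg hc, outVec, dif_neg (show ¬ m + 1 - 1 < 2 * n - 1 from by omega)]
  · rw [if_neg hm]
    have hm' : m = 2 * n := by omega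
    rw [outVec, dif_neg (show ¬ m - 1 < 2 * n - 1 from by omega), map_smul, Aop_single,
      show aAct k D τ (i0 + ((m : ℕ) : ZMod (2 * n))) (Sum.inr (Sum.inr (D.c i0))) = 0 from rfl,
      smul_zero]

lemma Aop_segVec (i : ZMod (2 * n)) (ℓ : ℕ) (h1 : 1 ≤ ℓ) (h2 : ℓ + 1 ≤ 2 * n) (s : KIdx n) :
    Aop k D τ (i + ((ℓ : ℕ) : ZMod (2 * n))) (segVec k D τ i ℓ s) =
      segVec k D τ i (ℓ + 1) s := by
  rcases s with e | ⟨i', j'⟩ | e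
  · simp only [segVec]
    split_ifs with h
    · rw [Aop_outVec k D τ i ℓ h1 (by omega), if_pos (by omega)]
    · rw [map_zero]
  · simp only [segVec]
    by_cases hcond : i = i' + ((j'.val + 1 : ℕ) : ZMod (2 * n)) ∧ j'.val + 1 + ℓ ≤ 2 * n
    · obtain ⟨hc1, hle⟩ := hcond
      rw [if_pos ⟨hc1, hle⟩]
      have harr : i + ((ℓ : ℕ) : ZMod (2 * n)) =
          i' + (((j'.val + 1 + ℓ : ℕ)) : ZMod (2 * n)) := by
        rw [hc1]; push_cast; ring
      rw [harr, Aop_outVec k D τ i' (j'.val + 1 + ℓ) (by omega) hle]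
      by_cases hm : j'.val + 1 + ℓ < 2 * n
      · rw [if_pos hm, if_pos ⟨hc1, by omega⟩]
        exact congrArg (outVec k D τ i') (by omega)
      · rw [if_neg hm, if_neg (fun hh => hm (by omega))]
    · rw [if_neg hcond, map_zero, if_neg (fun hh => hcond ⟨hh.1, by omega⟩)]
  · simp only [segVec]
    rw [map_zero]

lemma rho1_seg_apply (i : ZMod (2 * n)) (ℓ : ℕ) (h1 : 1 ≤ ℓ) (h2 : ℓ ≤ 2 * n) (s : KIdx n) :
    rho1 k D τ (pathElem k (DiagVertex D) (D.segPath i ℓ)) (Pi.single s 1) =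
      segVec k D τ i ℓ s := by
  induction ℓ with
  | zero => omega
  | succ ℓ ih =>
      by_cases h0 : ℓ = 0
      · subst h0
        rw [show (0 + 1 : ℕ) = 1 from rfl, pathElem_segPath_one, rho1_AG, Aop_single,
          aAct_eq_segVec]
      · rw [pathElem_segPath_succ, map_mul, Module.End.mul_apply, ih (by omega) (by omega),
          rho1_AG, Aop_segVec k D τ i ℓ (by omega) h2]

/-! #### The representation of the knot algebra -/

lemma rho1_rel : ∀ ⦃x y⦄, KnotRel k D τ x y → rho1 k D τ x = rho1 k D τ y := by
  intro x y h
  cases h with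
  | typeI i j hcomp hne =>
      rw [map_mul, rho1_AG, rho1_AG, map_zero]
      refine Module.Basis.ext (Pi.basisFun k (KIdx n)) fun s => ?_
      rw [Pi.basisFun_apply, Module.End.mul_apply, Aop_single, Aop_aAct_zero k D τ i j hne,
        LinearMap.zero_apply]
  | typeII e =>
      rw [map_smul, pathElem_gammaMinus, pathElem_gammaPlus]
      have h2n : 1 ≤ 2 * n := by have := NeZero.ne n; omega
      refine Module.Basis.ext (Pi.basisFun k (KIdx n)) fun s => ?_
      rw [Pi.basisFun_apply, rho1_seg_apply k D τ _ _ h2n le_rfl, LinearMap.smul_apply,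
        rho1_seg_apply k D τ _ _ h2n le_rfl]
      rcases s with e' | ⟨i', j'⟩ | e'
      · simp only [segVec]
        rw [D.c_under, D.c_over]
        by_cases he : e = e'
        · rw [if_pos he, if_pos he, outVec, outVec,
            dif_neg (show ¬ 2 * n - 1 < 2 * n - 1 from by omega),
            dif_neg (show ¬ 2 * n - 1 < 2 * n - 1 from by omega)]
          rw [smul_smul]
          have hsc1 : scal k D τ (D.under e) = (τ e : k) := by
            rw [scal, if_neg (by rw [D.c_under]; exact fun hh => over_ne_under D e hh.symm),
              D.c_under]
          have hsc2 : scal k D τ (D.overPt e) = 1 := by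
            rw [scal, if_pos (by rw [D.c_over])]
          rw [hsc1, hsc2, mul_one, D.c_under, D.c_over]
        · rw [if_neg he, if_neg he, smul_zero]
      · simp only [segVec]
        have hno : ∀ i0 : ZMod (2 * n),
            ¬ (i0 = i' + ((j'.val + 1 : ℕ) : ZMod (2 * n)) ∧ j'.val + 1 + 2 * n ≤ 2 * n) :=
          fun i0 hh => by omega
        rw [if_neg (hno _), if_neg (hno _), smul_zero]
      · simp only [segVec]
        rw [smul_zero]

noncomputable def rho : KnotAlg k D τ →ₐ[k] Module.End k (KIdx n → k) :=
  RingQuot.liftAlgHom k ⟨rho1 k D τ, rho1_rel k D τ⟩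

lemma rho_mk (x : PathAlg k (DiagVertex D)) :
    rho k D τ (RingQuot.mkAlgHom k (KnotRel k D τ) x) = rho1 k D τ x :=
  RingQuot.liftAlgHom_mkAlgHom_apply k _ _ x

noncomputable def unitVec : KIdx n → k := ∑ e : Fin n, Pi.single (Sum.inl e) 1

noncomputable def wmap : KnotAlg k D τ →ₗ[k] (KIdx n → k) where
  toFun x := rho k D τ x (unitVec k)
  map_add' x y := by rw [map_add, LinearMap.add_apply]
  map_smul' c x := by rw [map_smul, LinearMap.smul_apply]; rfl

lemma wmap_basis (s : KIdx n) :
    wmap k D τ (knotBasisFamily k D τ s) = Pi.single s 1 := by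
  rcases s with e | ⟨i, j⟩ | e
  · show rho k D τ (knotBasisFamily k D τ (Sum.inl e)) (unitVec k) = _
    rw [knotBasisFamily, rho_mk, rho1_vtx, unitVec, map_sum]
    have hterm : ∀ e' : Fin n,
        Vop k D e (Pi.single (Sum.inl e' : KIdx n) 1) =
          if e' = e then (Pi.single (Sum.inl e' : KIdx n) 1 : KIdx n → k) else 0 := by
      intro e'
      rw [Vop_single']
      rfl
    rw [Finset.sum_congr rfl (fun e' _ => hterm e'), Finset.sum_ite_eq',
      if_pos (Finset.mem_univ _)]
  · show rho k D τ (knotBasisFamily k D τ (Sum.inr (Sum.inl (i, j)))) (unitVec k) = _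
    rw [knotBasisFamily, rho_mk, unitVec, map_sum]
    have hterm : ∀ e' : Fin n,
        rho1 k D τ (pathElem k (DiagVertex D) (D.segPath i (j.val + 1)))
            (Pi.single (Sum.inl e' : KIdx n) 1) =
          if D.c i = e' then outVec k D τ i (j.val + 1) else 0 := by
      intro e'
      rw [rho1_seg_apply k D τ i (j.val + 1) (by omega) (by have := j.isLt; omega)]
      rfl
    rw [Finset.sum_congr rfl (fun e' _ => hterm e'), Finset.sum_ite_eq,
      if_pos (Finset.mem_univ _), outVec, dif_pos (show j.val + 1 - 1 < 2 * n - 1 from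
        by have := j.isLt; omega)]
    exact congrArg (fun t : Fin (2 * n - 1) =>
      (Pi.single (Sum.inr (Sum.inl (i, t))) 1 : KIdx n → k))
      (Fin.ext (show (j.val + 1 - 1 : ℕ) = j.val by omega))
  · show rho k D τ (knotBasisFamily k D τ (Sum.inr (Sum.inr e))) (unitVec k) = _
    rw [knotBasisFamily, rho_mk, pathElem_gammaPlus, unitVec, map_sum]
    have h2n : 1 ≤ 2 * n := by have := NeZero.ne n; omega
    have hterm : ∀ e' : Fin n,
        rho1 k D τ (pathElem k (DiagVertex D) (D.segPath (D.overPt e) (2 * n)))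
            (Pi.single (Sum.inl e' : KIdx n) 1) =
          if D.c (D.overPt e) = e' then outVec k D τ (D.overPt e) (2 * n) else 0 := by
      intro e'
      rw [rho1_seg_apply k D τ _ _ h2n le_rfl]
      rfl
    rw [Finset.sum_congr rfl (fun e' _ => hterm e'), Finset.sum_ite_eq,
      if_pos (Finset.mem_univ _), outVec,
      dif_neg (show ¬ 2 * n - 1 < 2 * n - 1 from by omega),
      show scal k D τ (D.overPt e) = 1 from by rw [scal, if_pos (by rw [D.c_over])], one_smul,
      D.c_over]

end Representation

end KnotAlgProof

set_option maxHeartbeats 1000000 in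
theorem stmt5 (k : Type) [Field k] [NeZero n] (D : GaussData n) (τ : Fin n → kˣ) :
    Module.finrank k (KnotAlg k D τ) = 4 * n ^ 2 := by
  classical
  set umap : (KnotAlgProof.KIdx n → k) →ₗ[k] KnotAlg k D τ :=
    (Pi.basisFun k (KnotAlgProof.KIdx n)).constr k (knotBasisFamily k D τ) with humap
  have hcomp : (KnotAlgProof.wmap k D τ).comp umap = LinearMap.id := by
    refine Module.Basis.ext (Pi.basisFun k (KnotAlgProof.KIdx n)) fun s => ?_
    rw [LinearMap.comp_apply, humap, Module.Basis.constr_basis, KnotAlgProof.wmap_basis,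
      LinearMap.id_apply, Pi.basisFun_apply]
  have hinj : Function.Injective umap := by
    intro a b hab
    have := congrArg (KnotAlgProof.wmap k D τ) hab
    rwa [← LinearMap.comp_apply, ← LinearMap.comp_apply, hcomp, LinearMap.id_apply,
      LinearMap.id_apply] at this
  have hsurj : Function.Surjective umap := by
    rw [← LinearMap.range_eq_top, humap, Module.Basis.constr_range,
      KnotAlgProof.span_knotBasis_eq_top]
  have equiv := LinearEquiv.ofBijective umap ⟨hinj, hsurj⟩
  rw [← LinearEquiv.finrank_eq equiv, Module.finrank_pi]
  simp only [KnotAlgProof.KIdx, Fintype.card_sum, Fintype.card_prod, Fintype.card_fin, ZMod.card]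
  obtain ⟨m, rfl⟩ : ∃ m, n = m + 1 := ⟨n - 1, by have := NeZero.ne n; omega⟩
  have hh : 2 * (m + 1) - 1 = 2 * m + 1 := by omega
  rw [hh]
  ring
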